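/- A tree T has a perfect matching if and only if 0 is not an eigenvalue of its adjacency matrix. -/

import Mathlib

open scoped Classical

/-- Characteristic polynomial of the adjacency matrix of a graph. -/
noncomputable def gCharpoly {V : Type*} [Fintype V] (G : SimpleGraph V) : Polynomial ℝ :=
  letI := Classical.decEq V
  letI := Classical.decRel G.Adj
  (G.adjMatrix ℝ).charpoly

/-- Adjacency eigenvalues listed in non-increasing order (with multiplicity). -/
noncomputable def eigsDesc {V : Type*} [Fintype V] (G : SimpleGraph V) : List ℝ :=
  ((gCharpoly G).roots.sort (· ≤ ·)).reverse

/-- Number of adjacency eigenvalues in the open interval (-1, 1), with multiplicity. -/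
noncomputable def numIn {V : Type*} [Fintype V] (G : SimpleGraph V) : ℕ :=
  ((gCharpoly G).roots.filter (fun x => -1 < x ∧ x < 1)).card

/-- Multiplicity of `lam` as an adjacency eigenvalue. -/
noncomputable def multOf {V : Type*} [Fintype V] (G : SimpleGraph V) (lam : ℝ) : ℕ :=
  (gCharpoly G).roots.count lam

/-- Nullity: dimension of the kernel of the adjacency matrix. -/
noncomputable def gNullity {V : Type*} [Fintype V] (G : SimpleGraph V) : ℕ :=
  letI := Classical.decRel G.Adj
  Module.finrank ℝ (LinearMap.ker (G.adjMatrix ℝ).mulVecLin)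

section Aux
set_option linter.unusedSectionVars false
open SimpleGraph Function
variable {V : Type*} [Fintype V] {G : SimpleGraph V}


/-- Walk from `σ^[n] i` back to `i` along edges `σ x — x`. -/
noncomputable def walkPow (σ : Equiv.Perm V) (hσ : ∀ x, G.Adj (σ x) x) (i : V) :
    (n : ℕ) → G.Walk (σ^[n] i) i
  | 0 => SimpleGraph.Walk.nil
  | n+1 => (SimpleGraph.Walk.cons (hσ (σ^[n] i)) (walkPow σ hσ i n)).copy
      (Function.iterate_succ_apply' σ n i).symm rfl

lemma walkPow_support (σ : Equiv.Perm V) (hσ : ∀ x, G.Adj (σ x) x) (i : V) (n : ℕ) :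
    (walkPow σ hσ i n).support = (List.range (n+1)).reverse.map (fun j => σ^[j] i) := by
  induction n with
  | zero => simp [walkPow, List.range_succ]
  | succ n ih =>
      rw [walkPow]
      rw [SimpleGraph.Walk.support_copy, SimpleGraph.Walk.support_cons, ih,
        List.range_succ (n := n+1)]
      simp only [List.reverse_append, List.reverse_singleton, List.map_cons, List.map,
        List.singleton_append, List.cons.injEq]
      refine ⟨(Function.iterate_succ_apply' σ n i).symm, ?_⟩
      simp

lemma walkPow_edges (σ : Equiv.Perm V) (hσ : ∀ x, G.Adj (σ x) x) (i : V) (n : ℕ) :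
    ∀ e ∈ (walkPow σ hσ i n).edges, ∃ j, j < n ∧ e = s(σ^[j+1] i, σ^[j] i) := by
  induction n with
  | zero => simp [walkPow]
  | succ n ih =>
      intro e he
      rw [walkPow, SimpleGraph.Walk.edges_copy, SimpleGraph.Walk.edges_cons] at he
      rcases List.mem_cons.mp he with h | h
      · exact ⟨n, Nat.lt_succ_self n, by
          rw [h, Function.iterate_succ_apply' σ n i]⟩
      · obtain ⟨j, hj, hje⟩ := ih e h
        exact ⟨j, Nat.lt_succ_of_lt hj, hje⟩

/-- In an acyclic graph, a permutation moving every vertex to a neighbour is an involution. -/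
lemma involutive_of_acyclic (hG : G.IsAcyclic) (σ : Equiv.Perm V)
    (hσ : ∀ x, G.Adj (σ x) x) : ∀ i, σ (σ i) = i := by
  intro i
  by_contra h2
  classical
  have hne : σ i ≠ i := (hσ i).ne
  set k := Function.minimalPeriod σ i with hk
  have hper : Function.IsPeriodicPt σ (orderOf σ) i := by
    have : (σ ^ orderOf σ) = 1 := pow_orderOf_eq_one σ
    unfold Function.IsPeriodicPt Function.IsFixedPt
    rw [Equiv.Perm.iterate_eq_pow, this]; rfl
  have hkpos : 0 < k := hper.minimalPeriod_pos (orderOf_pos σ)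
  have hkfix : σ^[k] i = i := Function.iterate_minimalPeriod
  have hinj : (Set.Iio k).InjOn (σ^[·] i) := Function.iterate_injOn_Iio_minimalPeriod
  have hk1 : k ≠ 1 := by intro h; rw [h] at hkfix; simp at hkfix; exact hne hkfix
  have hk2 : k ≠ 2 := by
    intro h; rw [h] at hkfix
    exact h2 (by simpa [Function.iterate_succ_apply'] using hkfix)
  have hk3 : 3 ≤ k := by omega
  -- the closing edge
  have hadj : G.Adj i (σ^[k-1] i) := by
    have := hσ (σ^[k-1] i)
    have h' : σ (σ^[k-1] i) = i := by
      rw [← Function.iterate_succ_apply' σ (k-1) i]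
      have h3 : (k-1).succ = k := by omega
      rw [h3]; exact hkfix
    rwa [h'] at this
  have hcyc : ((SimpleGraph.Walk.cons hadj (walkPow σ hσ i (k-1)))).IsCycle := by
    rw [SimpleGraph.Walk.cons_isCycle_iff]
    constructor
    · apply SimpleGraph.Walk.IsPath.mk'
      rw [walkPow_support]
      apply List.Nodup.map_on
      · intro x hx y hy hxy
        simp only [List.mem_reverse, List.mem_range] at hx hy
        have hx' : x < k := by omega
        have hy' : y < k := by omega
        exact hinj hx' hy' hxy
      · exact List.nodup_reverse.mpr List.nodup_range
    · intro hmem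
      obtain ⟨j, hj, hje⟩ := walkPow_edges σ hσ i (k-1) _ hmem
      rw [Sym2.eq_iff] at hje
      rcases hje with ⟨h1, _⟩ | ⟨h1, h2'⟩
      · have : (0:ℕ) = j + 1 := hinj (by omega : (0:ℕ) < k) (by omega : j+1 < k)
          (by simpa using h1)
        omega
      · have hj0 : (0:ℕ) = j := hinj (by omega : (0:ℕ) < k) (by omega : j < k)
          (by simpa using h1)
        have : k - 1 = j + 1 := hinj (by omega : k-1 < k) (by omega : j+1 < k) h2'
        omega
  exact hG _ hcyc

variable [DecidableEq V]

/-- Sign of a fixed-point-free involution depends only on the cardinality. -/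
lemma sign_of_fpf_involution (σ : Equiv.Perm V) (hinv : ∀ i, σ (σ i) = i)
    (hfpf : ∀ i, σ i ≠ i) :
    Equiv.Perm.sign σ = (-1) ^ (Fintype.card V + Fintype.card V / 2) := by
  classical
  have hsq : σ ^ 2 = 1 := by
    ext x; simp [pow_two, Equiv.Perm.mul_apply, hinv x]
  have hct : ∀ r ∈ σ.cycleType, r = 2 := by
    intro r hr
    have h2 : 2 ≤ r := Equiv.Perm.two_le_of_mem_cycleType hr
    have hdvd : r ∣ orderOf σ := Equiv.Perm.dvd_of_mem_cycleType hr
    have : orderOf σ ∣ 2 := orderOf_dvd_of_pow_eq_one hsq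
    have : r ∣ 2 := hdvd.trans this
    have hle : r ≤ 2 := Nat.le_of_dvd (by norm_num) this
    omega
  have hsupp : σ.support = Finset.univ := by
    apply Finset.eq_univ_iff_forall.mpr
    intro x; exact Equiv.Perm.mem_support.mpr (hfpf x)
  have hsum : σ.cycleType.sum = Fintype.card V := by
    rw [Equiv.Perm.sum_cycleType, hsupp, Finset.card_univ]
  have hrepl : σ.cycleType = Multiset.replicate σ.cycleType.card 2 :=
    Multiset.eq_replicate_card.mpr hct
  have hcard : 2 * σ.cycleType.card = Fintype.card V := by
    rw [← hsum]; conv_rhs => rw [hrepl]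
    rw [Multiset.sum_replicate]; ring
  rw [Equiv.Perm.sign_of_cycleType, hsum]
  congr 1
  omega

variable [DecidableRel G.Adj]

lemma det_adjMatrix_eq (hG : G.IsAcyclic) :
    (G.adjMatrix ℝ).det = (-1 : ℝ) ^ (Fintype.card V + Fintype.card V / 2) *
      (Finset.univ.filter (fun σ : Equiv.Perm V => ∀ i, G.Adj (σ i) i)).card := by
  rw [Matrix.det_apply']
  have h1 : ∀ σ : Equiv.Perm V,
      (∏ i, G.adjMatrix ℝ (σ i) i) = if (∀ i, G.Adj (σ i) i) then (1:ℝ) else 0 := by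
    intro σ
    simp only [SimpleGraph.adjMatrix_apply]
    exact Fintype.prod_boole
  calc (∑ σ : Equiv.Perm V, ((Equiv.Perm.sign σ : ℤ) : ℝ) * ∏ i, G.adjMatrix ℝ (σ i) i)
      = ∑ σ : Equiv.Perm V, (if (∀ i, G.Adj (σ i) i) then ((Equiv.Perm.sign σ : ℤ) : ℝ) else 0) := by
        apply Finset.sum_congr rfl
        intro σ _
        rw [h1, mul_ite, mul_one, mul_zero]
    _ = ∑ σ ∈ Finset.univ.filter (fun σ : Equiv.Perm V => ∀ i, G.Adj (σ i) i),
          ((Equiv.Perm.sign σ : ℤ) : ℝ) := (Finset.sum_filter _ _).symm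
    _ = ∑ _σ ∈ Finset.univ.filter (fun σ : Equiv.Perm V => ∀ i, G.Adj (σ i) i),
          ((-1 : ℝ) ^ (Fintype.card V + Fintype.card V / 2)) := by
        apply Finset.sum_congr rfl
        intro σ hσ
        rw [Finset.mem_filter] at hσ
        have hadj := hσ.2
        have hinv := involutive_of_acyclic hG σ hadj
        have hfpf : ∀ i, σ i ≠ i := fun i => (hadj i).ne
        rw [sign_of_fpf_involution σ hinv hfpf]
        push_cast
        norm_num
    _ = _ := by rw [Finset.sum_const, nsmul_eq_mul, mul_comm]

lemma pm_iff_exists_perm (hG : G.IsAcyclic) :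
    (∃ M : G.Subgraph, M.IsPerfectMatching) ↔ ∃ σ : Equiv.Perm V, ∀ i, G.Adj (σ i) i := by
  constructor
  · rintro ⟨M, hM⟩
    rw [SimpleGraph.Subgraph.isPerfectMatching_iff] at hM
    set f : V → V := fun v => (hM v).choose with hf
    have hadj : ∀ v, M.Adj v (f v) := fun v => (hM v).choose_spec.1
    have hinv : Function.Involutive f := by
      intro v
      exact ((hM (f v)).unique (hadj (f v)) (hadj v).symm)
    refine ⟨hinv.toPerm, fun i => ?_⟩
    exact (M.adj_sub (hadj i)).symm
  · rintro ⟨σ, hσ⟩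
    have hinv := involutive_of_acyclic hG σ hσ
    refine ⟨⟨Set.univ, fun a b => G.Adj a b ∧ σ a = b, ?_, ?_, ?_⟩, ?_⟩
    · exact fun h => h.1
    · intro a b _; trivial
    · refine ⟨?_⟩; rintro a b ⟨h1, h2⟩
      exact ⟨h1.symm, by rw [← h2, hinv a]⟩
    · rw [SimpleGraph.Subgraph.isPerfectMatching_iff]
      intro v
      refine ⟨σ v, ⟨(hσ v).symm, rfl⟩, ?_⟩
      rintro w ⟨_, hw⟩
      exact hw.symm

end Aux

theorem stmt2 {V : Type*} [Fintype V] (T : SimpleGraph V) (hT : T.IsTree) :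
    (∃ M : T.Subgraph, M.IsPerfectMatching) ↔ ¬ (gCharpoly T).IsRoot 0 := by
  letI := Classical.decEq V
  letI := Classical.decRel T.Adj
  have hchar : gCharpoly T = (T.adjMatrix ℝ).charpoly := rfl
  rw [hchar, pm_iff_exists_perm hT.IsAcyclic, Polynomial.IsRoot,
    ← Polynomial.coeff_zero_eq_eval_zero]
  have hdet := Matrix.det_eq_sign_charpoly_coeff (T.adjMatrix ℝ)
  have hS := det_adjMatrix_eq (G := T) hT.IsAcyclic
  have hm1 : ∀ n : ℕ, ((-1:ℝ) ^ n) ≠ 0 := fun n => pow_ne_zero n (by norm_num)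
  have h1 : ¬ (T.adjMatrix ℝ).charpoly.coeff 0 = 0 ↔ (T.adjMatrix ℝ).det ≠ 0 := by
    rw [hdet]
    simp [mul_eq_zero, hm1 (Fintype.card V)]
  have h2 : (T.adjMatrix ℝ).det ≠ 0 ↔
      (Finset.univ.filter (fun σ : Equiv.Perm V => ∀ i, T.Adj (σ i) i)).Nonempty := by
    rw [hS, Finset.nonempty_iff_ne_empty]
    constructor
    · intro h he
      rw [he] at h; simp at h
    · intro h hc
      rcases mul_eq_zero.mp hc with h' | h'
      · exact hm1 _ h'
      · exact h (by
          have : (Finset.univ.filter (fun σ : Equiv.Perm V => ∀ i, T.Adj (σ i) i)).card = 0 := by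
            exact_mod_cast h'
          exact Finset.card_eq_zero.mp this)
  rw [h1, h2]
  simp [Finset.filter_nonempty_iff]
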